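/- With ĝ_{i j̄} = Φ_{i j̄}/Φ, the determinant of the 2×2 Hermitian matrix ĝ equals 1/(Φ² Z³). -/

import Mathlib

/-- `Φᵢ = z̄ᵢ Φ^(1−2kᵢ)/Z`. -/
noncomputable def phiD (k1 k2 Φv Zv : ℝ) (z : ℂ × ℂ) (i : Fin 2) : ℂ :=
  (starRingEnd ℂ) (if i = 0 then z.1 else z.2)
    * ((Φv ^ (1 - 2 * (if i = 0 then k1 else k2)) : ℝ) : ℂ) / ((Zv : ℝ) : ℂ)

/-- The explicit formula for the mixed Wirtinger second derivatives
`Φ_{i j̄} = δ_{ij} Φ^(1−2kᵢ)/Z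
  + (1 − 2kᵢ − 2kⱼ + (4/Z) Σₐ kₐ²|zₐ|²Φ^(−2kₐ)) Φᵢ Φ_{j̄}/Φ`. -/
noncomputable def hessEntry (k1 k2 Φv Zv : ℝ) (z : ℂ × ℂ) (i j : Fin 2) : ℂ :=
  (if i = j then ((Φv ^ (1 - 2 * (if i = 0 then k1 else k2)) / Zv : ℝ) : ℂ) else 0)
    + (((1 - 2 * (if i = 0 then k1 else k2) - 2 * (if j = 0 then k1 else k2)
        + 4 / Zv * (k1 ^ 2 * ‖z.1‖ ^ 2 * Φv ^ (-(2 * k1))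
            + k2 ^ 2 * ‖z.2‖ ^ 2 * Φv ^ (-(2 * k2)))) : ℝ) : ℂ)
      * phiD k1 k2 Φv Zv z i * (starRingEnd ℂ) (phiD k1 k2 Φv Zv z j) / ((Φv : ℝ) : ℂ)

/-- With `ĝ_{i j̄} = Φ_{i j̄}/Φ`, the determinant of the 2×2 Hermitian matrix `ĝ`
equals `1/(Φ² Z³)`. -/
theorem stmt_7 (k1 k2 : ℝ) (hk1 : 0 < k1) (hk12 : k1 ≤ k2) (hsum : k1 + k2 = 1)
    (z : ℂ × ℂ) (hz : z ≠ 0) (Φv : ℝ) (hΦ : 0 < Φv)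
    (heq : ‖z.1‖ ^ 2 * Φv ^ (-(2 * k1)) + ‖z.2‖ ^ 2 * Φv ^ (-(2 * k2)) = 1)
    (Zv : ℝ)
    (hZ : Zv = 2 * (k1 * ‖z.1‖ ^ 2 * Φv ^ (-(2 * k1))
        + k2 * ‖z.2‖ ^ 2 * Φv ^ (-(2 * k2)))) :
    (Matrix.of fun i j : Fin 2 => hessEntry k1 k2 Φv Zv z i j / ((Φv : ℝ) : ℂ)).det
      = ((1 / (Φv ^ 2 * Zv ^ 3) : ℝ) : ℂ) := by
  have hk2pos : 0 < k2 := lt_of_lt_of_le hk1 hk12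
  have hp1 : (0:ℝ) < Φv ^ (-(2 * k1)) := Real.rpow_pos_of_pos hΦ _
  have hp2 : (0:ℝ) < Φv ^ (-(2 * k2)) := Real.rpow_pos_of_pos hΦ _
  have hZpos : 0 < Zv := by
    rw [hZ]
    nlinarith [mul_nonneg (mul_nonneg (sub_nonneg.mpr hk12) (sq_nonneg (‖z.2‖))) hp2.le,
      sq_nonneg (‖z.1‖), sq_nonneg (‖z.2‖), heq, hk1, hp1,
      mul_nonneg (sq_nonneg (‖z.1‖)) hp1.le,
      mul_nonneg (sq_nonneg (‖z.2‖)) hp2.le]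
  have h1' : ((‖z.1‖ : ℝ) : ℂ) ^ 2 = (starRingEnd ℂ) z.1 * z.1 := by
    rw [mul_comm, Complex.mul_conj, ← Complex.sq_norm]
    push_cast
    ring
  have h2' : ((‖z.2‖ : ℝ) : ℂ) ^ 2 = (starRingEnd ℂ) z.2 * z.2 := by
    rw [mul_comm, Complex.mul_conj, ← Complex.sq_norm]
    push_cast
    ring
  have key : (Matrix.of fun i j : Fin 2 => hessEntry k1 k2 Φv Zv z i j / ((Φv : ℝ) : ℂ)).det
      = ((((Φv ^ (1 - 2 * k1) / Zv + (1 - 2 * k1 - 2 * k1 + 4 / Zv * (k1 ^ 2 * ‖z.1‖ ^ 2 * Φv ^ (-(2 * k1)) + k2 ^ 2 * ‖z.2‖ ^ 2 * Φv ^ (-(2 * k2)))) * (‖z.1‖ ^ 2 * (Φv ^ (1 - 2 * k1)) ^ 2 / Zv ^ 2) / Φv) / Φv) * ((Φv ^ (1 - 2 * k2) / Zv + (1 - 2 * k2 - 2 * k2 + 4 / Zv * (k1 ^ 2 * ‖z.1‖ ^ 2 * Φv ^ (-(2 * k1)) + k2 ^ 2 * ‖z.2‖ ^ 2 * Φv ^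 (-(2 * k2)))) * (‖z.2‖ ^ 2 * (Φv ^ (1 - 2 * k2)) ^ 2 / Zv ^ 2) / Φv) / Φv) - (1 - 2 * k1 - 2 * k2 + 4 / Zv * (k1 ^ 2 * ‖z.1‖ ^ 2 * Φv ^ (-(2 * k1)) + k2 ^ 2 * ‖z.2‖ ^ 2 * Φv ^ (-(2 * k2)))) * (1 - 2 * k2 - 2 * k1 + 4 / Zv * (k1 ^ 2 * ‖z.1‖ ^ 2 * Φv ^ (-(2 * k1)) + k2 ^ 2 * ‖z.2‖ ^ 2 * Φv ^ (-(2 * k2)))) * (‖z.1‖ ^ 2 * (Φv ^ (1 - 2 * k1)) ^ 2 / Zv ^ 2) * (‖z.2‖ ^ 2 * (Φv ^ (1 - 2 * k2)) ^ 2 / Zv ^ 2) / Φv ^ 4 : ℝ) : ℂ) := by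
    rw [Matrix.det_fin_two]
    simp only [Matrix.of_apply, hessEntry, phiD, reduceIte, map_mul, map_div₀,
      Complex.conj_conj, Complex.conj_ofReal]
    push_cast
    rw [h1', h2']
    ring
  rw [key, Complex.ofReal_inj]
  have hk2e : k2 = 1 - k1 := by linarith
  subst hk2e
  have hq : Φv ^ (-(2 * (1 - k1))) = 1 / (Φv ^ (-(2 * k1)) * Φv ^ 2) := by
    rw [eq_div_iff (by positivity)]
    rw [show (Φv ^ 2 : ℝ) = Φv ^ ((2:ℕ) : ℝ) from (Real.rpow_natCast Φv 2).symm]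
    rw [← Real.rpow_add hΦ, ← Real.rpow_add hΦ]
    rw [show (-(2 * (1 - k1)) + (-(2 * k1) + ((2:ℕ) : ℝ))) = 0 by push_cast; ring]
    exact Real.rpow_zero Φv
  have hr : Φv ^ (1 - 2 * k1) = Φv * Φv ^ (-(2 * k1)) := by
    rw [show (1 - 2 * k1 : ℝ) = 1 + (-(2 * k1)) by ring, Real.rpow_add hΦ, Real.rpow_one]
  have hs : Φv ^ (1 - 2 * (1 - k1)) = 1 / (Φv * Φv ^ (-(2 * k1))) := by
    rw [eq_div_iff (by positivity)]
    rw [mul_comm Φv (Φv ^ (-(2 * k1))), ← mul_assoc, ← Real.rpow_add hΦ]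
    rw [show (1 - 2 * (1 - k1) + -(2 * k1) : ℝ) = -1 by ring]
    rw [Real.rpow_neg_one]
    exact inv_mul_cancel₀ hΦ.ne'
  have hBq : ‖z.2‖ ^ 2 * Φv ^ (-(2 * (1 - k1)))
      = 1 - ‖z.1‖ ^ 2 * Φv ^ (-(2 * k1)) := by linarith
  have hB : ‖z.2‖ ^ 2
      = (1 - ‖z.1‖ ^ 2 * Φv ^ (-(2 * k1))) * (Φv ^ (-(2 * k1)) * Φv ^ 2) := by
    rw [hq] at hBq
    field_simp at hBq
    linear_combination hBq
  have hZ2 : Zv = 2 * (k1 * (‖z.1‖ ^ 2 * Φv ^ (-(2 * k1)))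
      + (1 - k1) * (1 - ‖z.1‖ ^ 2 * Φv ^ (-(2 * k1)))) := by
    linear_combination hZ + 2 * (1 - k1) * hBq
  rw [hr, hs, hq, hB]
  field_simp
  subst hZ2
  ring
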